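/- Let A be a closed densely defined operator on a Banach space X such that for some K ≥ 1 and θ ∈ [π/2, π), (1 + |z|)‖(A + z)^{-1}‖ ≤ K for all z in the sector S_θ = {z : |arg z| ≤ θ} ∪ {0}. Then for every λ in the sector S_{2θ-π} with λ ≠ 0, the operator A² + λ is invertible with (A² + λ)^{-1} = (A - i√λ)^{-1}(A + i√λ)^{-1}, and there exists K̃ ≥ 1 such that (1 + |λ|)‖(A² + λ)^{-1}‖ ≤ K̃ for all λ ∈ S_{2θ-π}. -/

import Mathlib

variable {X : Type*} [NormedAddCommGroup X] [NormedSpace ℂ X]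

/-- A bounded two-sided inverse `R = (A + z)⁻¹` of the (unbounded, partially
defined) operator `A + z`, i.e. `-z` belongs to the resolvent set of `A`. -/
structure IsResolvent (A : X →ₗ.[ℂ] X) (z : ℂ) (R : X →L[ℂ] X) : Prop where
  mem : ∀ y, R y ∈ A.domain
  right_inv : ∀ y, A ⟨R y, mem y⟩ + z • R y = y
  left_inv : ∀ x : A.domain, R (A x + z • (x : X)) = x

/-- The sector `S_φ = {z ∈ ℂ : |arg z| ≤ φ} ∪ {0}`. -/
def Sector (φ : ℝ) : Set ℂ := {z | z = 0 ∨ |Complex.arg z| ≤ φ}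

/-- Resolvents are unique. -/
lemma IsResolvent.unique {A : X →ₗ.[ℂ] X} {z : ℂ} {R R' : X →L[ℂ] X}
    (h : IsResolvent A z R) (h' : IsResolvent A z R') : R = R' := by
  ext y
  have h2 := h'.left_inv ⟨R y, h.mem y⟩
  have h1 : A ⟨R y, h.mem y⟩ + z • R y = y := h.right_inv y
  rw [show ((⟨R y, h.mem y⟩ : A.domain) : X) = R y from rfl, h1] at h2
  exact h2.symm

/-- If `μ² = -λ` then the composition of the resolvents at `-μ` and `μ` is a
two-sided inverse of `A² + λ`. -/
lemma comp_inv {A : X →ₗ.[ℂ] X} {μ lam : ℂ} (hμ : μ ^ 2 = -lam)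
    {Rm Rp : X →L[ℂ] X} (hRm : IsResolvent A (-μ) Rm) (hRp : IsResolvent A μ Rp) :
    (∀ y : X, ∃ h1 : Rm (Rp y) ∈ A.domain, ∃ h2 : A ⟨Rm (Rp y), h1⟩ ∈ A.domain,
        A ⟨A ⟨Rm (Rp y), h1⟩, h2⟩ + lam • Rm (Rp y) = y) ∧
    (∀ x : A.domain, ∀ hx : A x ∈ A.domain,
        Rm (Rp (A ⟨A x, hx⟩ + lam • (x : X))) = x) := by
  constructor
  · intro y
    have h1 : Rm (Rp y) ∈ A.domain := hRm.mem (Rp y)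
    have hv : A ⟨Rm (Rp y), h1⟩ + (-μ) • Rm (Rp y) = Rp y := hRm.right_inv (Rp y)
    have hAv : A ⟨Rm (Rp y), h1⟩ = Rp y + μ • Rm (Rp y) := by
      have h := eq_sub_of_add_eq hv
      rwa [neg_smul, sub_neg_eq_add] at h
    have h2 : A ⟨Rm (Rp y), h1⟩ ∈ A.domain := by
      rw [hAv]; exact A.domain.add_mem (hRp.mem y) (A.domain.smul_mem μ h1)
    refine ⟨h1, h2, ?_⟩
    have key : (⟨A ⟨Rm (Rp y), h1⟩, h2⟩ : A.domain)
        = ⟨Rp y, hRp.mem y⟩ + μ • ⟨Rm (Rp y), h1⟩ := Subtype.ext (by simpa using hAv)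
    have hu : A ⟨Rp y, hRp.mem y⟩ = y - μ • Rp y :=
      eq_sub_of_add_eq (hRp.right_inv y)
    rw [key, A.map_add, A.map_smul, hu]
    show y - μ • Rp y + μ • A ⟨Rm (Rp y), h1⟩ + lam • Rm (Rp y) = y
    rw [hAv, smul_add, smul_smul, show μ * μ = -lam by rw [← sq, hμ], neg_smul]
    module
  · intro x hx
    set w : A.domain := (⟨A x, hx⟩ : A.domain) + (-μ) • x with hw
    have hwc : ((w : X)) = A x + (-μ) • (x : X) := rfl
    have hAw : A w = A ⟨A x, hx⟩ + (-μ) • A x := by rw [hw, A.map_add, A.map_smul]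
    have e1 : A ⟨A x, hx⟩ + lam • (x : X) = A w + μ • (w : X) := by
      rw [hAw, hwc, smul_add, smul_smul, show μ * -μ = lam by rw [mul_neg, ← sq, hμ, neg_neg]]
      module
    rw [e1, hRp.left_inv w, hwc]
    exact hRm.left_inv x

/-- Arguments of `±i√λ` (principal branch). -/
lemma arg_stuff {lam : ℂ} (hl : lam ≠ 0) :
    Complex.arg (Complex.I * lam ^ (1/2:ℂ)) = lam.arg / 2 + Real.pi / 2 ∧
    Complex.arg (-(Complex.I * lam ^ (1/2:ℂ))) = lam.arg / 2 - Real.pi / 2 := by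
  have hw : lam ^ (1/2:ℂ) = Complex.exp (Complex.log lam * (1/2)) :=
    Complex.cpow_def_of_ne_zero hl _
  have hIexp : Complex.exp ((Real.pi/2 : ℝ) * Complex.I) = Complex.I := by
    rw [Complex.exp_mul_I, ← Complex.ofReal_cos, ← Complex.ofReal_sin,
        Real.cos_pi_div_two, Real.sin_pi_div_two]
    simp
  have hIexp' : Complex.exp ((-(Real.pi/2) : ℝ) * Complex.I) = -Complex.I := by
    rw [Complex.exp_mul_I, ← Complex.ofReal_cos, ← Complex.ofReal_sin,
        Real.cos_neg, Real.sin_neg, Real.cos_pi_div_two, Real.sin_pi_div_two]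
    simp
  have ha1 := Complex.neg_pi_lt_arg lam
  have ha2 := Complex.arg_le_pi lam
  have hpi := Real.pi_pos
  constructor
  · have he : Complex.I * lam ^ (1/2:ℂ)
        = Complex.exp (Complex.log lam * (1/2) + ((Real.pi/2 : ℝ) : ℂ) * Complex.I) := by
      rw [Complex.exp_add, hw, hIexp]; ring
    have him2 : (Complex.log lam * (1/2) + ((Real.pi/2 : ℝ) : ℂ) * Complex.I).im
        = lam.arg / 2 + Real.pi / 2 := by
      simp [Complex.add_im, Complex.log_im]; ring
    rw [he, ← Complex.log_im, Complex.log_exp (by rw [him2]; linarith) (by rw [him2]; linarith),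
      him2]
  · have he : -(Complex.I * lam ^ (1/2:ℂ))
        = Complex.exp (Complex.log lam * (1/2) + ((-(Real.pi/2) : ℝ) : ℂ) * Complex.I) := by
      rw [Complex.exp_add, hw, hIexp']; ring
    have him2 : (Complex.log lam * (1/2) + ((-(Real.pi/2) : ℝ) : ℂ) * Complex.I).im
        = lam.arg / 2 - Real.pi / 2 := by
      simp [Complex.add_im, Complex.log_im]; ring
    rw [he, ← Complex.log_im, Complex.log_exp (by rw [him2]; linarith) (by rw [him2]; linarith),
      him2]

/-- Lemma 3.5, resolvent part: let `A` be a closed densely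
defined operator on a complex Banach space `X` such that for some `K ≥ 1`
and `θ ∈ [π/2, π)`, `(1 + |z|)‖(A + z)⁻¹‖ ≤ K` for all `z ∈ S_θ`.  Then for
every `0 ≠ λ ∈ S_{2θ-π}` the operator `A² + λ` is invertible with
`(A² + λ)⁻¹ = (A - i√λ)⁻¹(A + i√λ)⁻¹` (principal square root), and there is
`K̃ ≥ 1` with `(1 + |λ|)‖(A² + λ)⁻¹‖ ≤ K̃` for all `λ ∈ S_{2θ-π}`, i.e.
`A ∈ P(θ)`, `θ ≥ π/2`, implies `A² ∈ P(2θ - π)`. -/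
theorem stmt5 (A : X →ₗ.[ℂ] X)
    (hclosed : IsClosed (A.graph : Set (X × X)))
    (hdense : Dense (A.domain : Set X))
    (K θ : ℝ) (hK : 1 ≤ K) (hθ1 : Real.pi / 2 ≤ θ) (hθ2 : θ < Real.pi)
    (hres : ∀ z ∈ Sector θ, ∃ R : X →L[ℂ] X,
      IsResolvent A z R ∧ (1 + ‖z‖) * ‖R‖ ≤ K) :
    ∃ Ktilde : ℝ, 1 ≤ Ktilde ∧
      ∀ lam ∈ Sector (2 * θ - Real.pi), lam ≠ 0 →
        (∃ Rm Rp : X →L[ℂ] X,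
          IsResolvent A (-(Complex.I * lam ^ (1/2 : ℂ))) Rm ∧
          IsResolvent A (Complex.I * lam ^ (1/2 : ℂ)) Rp) ∧
        ∀ Rm Rp : X →L[ℂ] X,
          IsResolvent A (-(Complex.I * lam ^ (1/2 : ℂ))) Rm →
          IsResolvent A (Complex.I * lam ^ (1/2 : ℂ)) Rp →
          (∀ y : X, ∃ h1 : Rm (Rp y) ∈ A.domain,
            ∃ h2 : A ⟨Rm (Rp y), h1⟩ ∈ A.domain,
              A ⟨A ⟨Rm (Rp y), h1⟩, h2⟩ + lam • Rm (Rp y) = y) ∧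
          (∀ x : A.domain, ∀ hx : A x ∈ A.domain,
            Rm (Rp (A ⟨A x, hx⟩ + lam • (x : X))) = x) ∧
          (1 + ‖lam‖) * ‖Rm.comp Rp‖ ≤ Ktilde := by
  have hpi := Real.pi_pos
  refine ⟨K ^ 2, by nlinarith, ?_⟩
  intro lam hlam hl0
  have harg : |lam.arg| ≤ 2 * θ - Real.pi := hlam.resolve_left hl0
  rw [abs_le] at harg
  obtain ⟨hap, ham⟩ := arg_stuff hl0
  -- sector membership of ±i√λ
  have hmemp : Complex.I * lam ^ (1/2:ℂ) ∈ Sector θ := by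
    right
    rw [hap, abs_le]
    constructor <;> linarith [harg.1, harg.2]
  have hmemm : -(Complex.I * lam ^ (1/2:ℂ)) ∈ Sector θ := by
    right
    rw [ham, abs_le]
    constructor <;> linarith [harg.1, harg.2]
  obtain ⟨Rm, hRm, hRmB⟩ := hres _ hmemm
  obtain ⟨Rp, hRp, hRpB⟩ := hres _ hmemp
  refine ⟨⟨Rm, Rp, hRm, hRp⟩, ?_⟩
  intro Rm' Rp' hRm' hRp'
  have hμsq : (Complex.I * lam ^ (1/2:ℂ)) ^ 2 = -lam := by
    rw [mul_pow, Complex.I_sq,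
      show (1/2:ℂ) = ((2:ℕ):ℂ)⁻¹ by norm_num, Complex.cpow_nat_inv_pow lam two_ne_zero]
    ring
  obtain ⟨hri, hli⟩ := comp_inv hμsq hRm' hRp'
  refine ⟨hri, hli, ?_⟩
  obtain rfl : Rm' = Rm := hRm'.unique hRm
  obtain rfl : Rp' = Rp := hRp'.unique hRp
  -- norm bound
  set s : ℝ := ‖lam‖ ^ (1/2:ℝ) with hs
  have hsnn : 0 ≤ s := Real.rpow_nonneg (norm_nonneg _) _
  have hss : s * s = ‖lam‖ := by
    rw [hs, ← Real.rpow_add (norm_pos_iff.mpr hl0)]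
    norm_num
  have hnorm : ‖Complex.I * lam ^ (1/2:ℂ)‖ = s := by
    rw [norm_mul, Complex.norm_I, one_mul,
      Complex.norm_cpow_of_ne_zero hl0]
    norm_num
    rfl
  have hb1 : (1 + s) * ‖Rm'‖ ≤ K := by rwa [norm_neg, hnorm] at hRmB
  have hb2 : (1 + s) * ‖Rp'‖ ≤ K := by rwa [hnorm] at hRpB
  have hcomp : ‖Rm'.comp Rp'‖ ≤ ‖Rm'‖ * ‖Rp'‖ := ContinuousLinearMap.opNorm_comp_le Rm' Rp'
  have key : ((1 + s) * ‖Rm'‖) * ((1 + s) * ‖Rp'‖) ≤ K * K :=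
    mul_le_mul hb1 hb2 (by positivity) (by linarith)
  nlinarith [norm_nonneg Rm', norm_nonneg Rp', norm_nonneg (Rm'.comp Rp'),
    mul_le_mul_of_nonneg_left hcomp (by nlinarith : (0:ℝ) ≤ 1 + ‖lam‖),
    mul_nonneg (mul_nonneg hsnn (norm_nonneg Rm')) (norm_nonneg Rp'),
    mul_nonneg (mul_nonneg (mul_nonneg hsnn hsnn) (norm_nonneg Rm')) (norm_nonneg Rp')]
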